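/- arXiv:1911.09825 — 2 statements merged into one kernel-verified Lean document; each statement's English description precedes it below -/
import Mathlib

section
/- Let n, r be natural numbers, let s : (Fin n → ℂ) → (Fin r → ℂ) be differentiable (Differentiable ℂ s), and define the superpotential W : (Fin n → ℂ) × (Fin r → ℂ) → ℂ by W(y,p) = ∑ i, p i * s y i. Then the critical locus {(y,p) | fderiv ℂ W (y,p) = 0} is equal to the set {(y,p) | s y = 0 ∧ p = 0} if and only if for every y with s y = 0 the derivative fderiv ℂ s y : (Fin n → ℂ) →L[ℂ] (Fin r → ℂ) is surjective. (This is Lemma 2.3 of the paper: for a vector bundle E with regular section s cutting out X on a smooth space, X is smooth if and only if the critical locus of the superpotential W : E^∨ → ℂ induced by s equals X; the étale-local model proved in the paper is exactly this statement for a trivial rank-r bundle on affine space.) -/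
open ContinuousLinearMap

lemma superpot_hasFDeriv (n r : ℕ) (s : (Fin n → ℂ) → (Fin r → ℂ)) (hs : Differentiable ℂ s)
    (yp : (Fin n → ℂ) × (Fin r → ℂ)) :
    HasFDerivAt (fun yp : (Fin n → ℂ) × (Fin r → ℂ) => ∑ i, yp.2 i * s yp.1 i)
      (∑ i : Fin r,
        ((yp.2 i) • (((proj i : (Fin r → ℂ) →L[ℂ] ℂ).comp (fderiv ℂ s yp.1)).comp
             (fst ℂ (Fin n → ℂ) (Fin r → ℂ)))
         + (s yp.1 i) • ((proj i : (Fin r → ℂ) →L[ℂ] ℂ).comp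
             (snd ℂ (Fin n → ℂ) (Fin r → ℂ))))) yp := by
  apply HasFDerivAt.fun_sum
  intro i _
  have hf : HasFDerivAt (fun yp : (Fin n → ℂ) × (Fin r → ℂ) => yp.2 i)
      ((proj i : (Fin r → ℂ) →L[ℂ] ℂ).comp (snd ℂ (Fin n → ℂ) (Fin r → ℂ))) yp :=
    ((proj i : (Fin r → ℂ) →L[ℂ] ℂ).comp (snd ℂ (Fin n → ℂ) (Fin r → ℂ))).hasFDerivAt
  have h1 : HasFDerivAt (fun yp : (Fin n → ℂ) × (Fin r → ℂ) => s yp.1)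
      ((fderiv ℂ s yp.1).comp (fst ℂ (Fin n → ℂ) (Fin r → ℂ))) yp :=
    (hs yp.1).hasFDerivAt.comp yp hasFDerivAt_fst
  have hg : HasFDerivAt (fun yp : (Fin n → ℂ) × (Fin r → ℂ) => s yp.1 i)
      (((proj i : (Fin r → ℂ) →L[ℂ] ℂ).comp (fderiv ℂ s yp.1)).comp
        (fst ℂ (Fin n → ℂ) (Fin r → ℂ))) yp := by
    have := (proj i : (Fin r → ℂ) →L[ℂ] ℂ).hasFDerivAt.comp yp h1
    rwa [← ContinuousLinearMap.comp_assoc] at this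
  exact hf.mul hg

/-- local model of Lemma 2.3 of the paper.
For a differentiable section `s` of the trivial rank-`r` bundle on affine `n`-space,
with superpotential `W (y, p) = ∑ i, p i * s y i`, the critical locus of `W` equals
the zero locus of `s` embedded via the zero section if and only if for every zero
`y` of `s` the derivative `fderiv ℂ s y` is surjective. -/
theorem crit_locus_eq_zero_locus_iff_surjective_fderiv
    (n r : ℕ) (s : (Fin n → ℂ) → (Fin r → ℂ)) (hs : Differentiable ℂ s)
    (W : (Fin n → ℂ) × (Fin r → ℂ) → ℂ)
    (hW : W = fun yp => ∑ i, yp.2 i * s yp.1 i) :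
    {yp : (Fin n → ℂ) × (Fin r → ℂ) | fderiv ℂ W yp = 0} =
      {yp : (Fin n → ℂ) × (Fin r → ℂ) | s yp.1 = 0 ∧ yp.2 = 0} ↔
    ∀ y : Fin n → ℂ, s y = 0 → Function.Surjective (fderiv ℂ s y) := by
  subst hW
  -- characterization of critical points
  have hcrit : ∀ yp : (Fin n → ℂ) × (Fin r → ℂ),
      fderiv ℂ (fun yp : (Fin n → ℂ) × (Fin r → ℂ) => ∑ i, yp.2 i * s yp.1 i) yp = 0 ↔
      s yp.1 = 0 ∧ ∀ v : Fin n → ℂ, ∑ i, yp.2 i * fderiv ℂ s yp.1 v i = 0 := by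
    intro yp
    rw [(superpot_hasFDeriv n r s hs yp).fderiv]
    constructor
    · intro h
      have happ : ∀ vq : (Fin n → ℂ) × (Fin r → ℂ),
          (∑ i, yp.2 i * fderiv ℂ s yp.1 vq.1 i) + ∑ i, vq.2 i * s yp.1 i = 0 := by
        intro vq
        have := congrArg (fun L => L vq) h
        simpa [ContinuousLinearMap.sum_apply, Finset.sum_add_distrib, mul_comm] using this
      constructor
      · funext j
        have := happ (0, Pi.single j 1)
        simpa [Pi.single_apply, Finset.sum_ite_eq'] using this
      · intro v
        have := happ (v, 0)
        simpa using this
    · rintro ⟨h1, h2⟩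
      refine ContinuousLinearMap.ext fun vq => ?_
      simp [ContinuousLinearMap.sum_apply, Finset.sum_add_distrib, h1, mul_comm, h2 vq.1]
  constructor
  · intro hset y hy
    by_contra hsurj
    have hlt : LinearMap.range (fderiv ℂ s y).toLinearMap < ⊤ := by
      rw [lt_top_iff_ne_top]
      intro h
      exact hsurj (LinearMap.range_eq_top.mp h)
    obtain ⟨f, hf0, hfbot⟩ :=
      Submodule.exists_dual_map_eq_bot_of_lt_top hlt inferInstance
    set p : Fin r → ℂ := fun i => f (Pi.single i 1) with hp
    have hsingle : ∀ x : Fin r, (Pi.single x 1 : Fin r → ℂ) = fun j => if x = j then 1 else 0 :=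
      fun x => funext fun j => by simp [Pi.single_apply, eq_comm]
    have hfp : ∀ w : Fin r → ℂ, f w = ∑ i, w i * p i := by
      intro w
      conv_lhs => rw [pi_eq_sum_univ w]
      simp [hp, hsingle, mul_comm]
    have hpne : p ≠ 0 := by
      intro h
      apply hf0
      refine LinearMap.ext fun w => ?_
      rw [hfp w, h]
      simp
    have hmem : (y, p) ∈ {yp : (Fin n → ℂ) × (Fin r → ℂ) | fderiv ℂ
        (fun yp : (Fin n → ℂ) × (Fin r → ℂ) => ∑ i, yp.2 i * s yp.1 i) yp = 0} := by
      rw [Set.mem_setOf_eq, hcrit]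
      refine ⟨hy, fun v => ?_⟩
      have hmem : fderiv ℂ s y v ∈ (LinearMap.range (fderiv ℂ s y).toLinearMap) :=
        LinearMap.mem_range_self _ v
      have : f (fderiv ℂ s y v) = 0 := by
        have : f (fderiv ℂ s y v) ∈ (LinearMap.range (fderiv ℂ s y).toLinearMap).map f :=
          Submodule.mem_map_of_mem hmem
        rwa [hfbot, Submodule.mem_bot] at this
      rw [hfp] at this
      simpa [mul_comm] using this
    rw [hset] at hmem
    exact hpne hmem.2
  · intro hsurj
    ext yp
    rw [Set.mem_setOf_eq, Set.mem_setOf_eq, hcrit]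
    constructor
    · rintro ⟨h1, h2⟩
      refine ⟨h1, ?_⟩
      funext j
      obtain ⟨v, hv⟩ := hsurj yp.1 h1 (Pi.single j 1)
      have := h2 v
      rw [hv] at this
      simpa [Pi.single_apply, Finset.sum_ite_eq'] using this
    · rintro ⟨h1, h2⟩
      exact ⟨h1, fun v => by simp [h2]⟩
end

section
/- Let A be a commutative ring, let a₁, …, a_r ∈ A be a regular sequence generating the ideal I = (a₁,…,a_r), and let J ⊆ R(A,I) be the ideal of the extended Rees algebra generated by a₁·T⁻¹, …, a_r·T⁻¹. Then the composite A-algebra homomorphism A[X] → R(A,I) → R(A,I)/J sending X to the class of T is surjective, and its kernel is the ideal I·A[X]; equivalently, R(A,I)/J is isomorphic as an A-algebra to the polynomial ring (A/I)[X]. (This is the second assertion of Lemma 2.2 of the paper: the zero locus of the regular section s_𝒴⁻ on the deformation to the normal cone 𝒴 is X × 𝔸¹, in its affine-local form.) -/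
set_option synthInstance.maxHeartbeats 1000000
set_option maxHeartbeats 1000000


open LaurentPolynomial

variable (A : Type*) [CommRing A]

/-- The extended Rees algebra of an ideal `I ⊆ A`: the `A`-subalgebra of the Laurent
polynomial ring `A[T,T⁻¹]` consisting of those Laurent polynomials `∑ₙ xₙ Tⁿ` whose
coefficient `xₙ` lies in `I ^ (-n)` for all `n < 0` (for `n ≥ 0` the condition is
vacuous since `I ^ 0 = ⊤`). -/
def extendedReesAlgebra (I : Ideal A) : Subalgebra A (LaurentPolynomial A) where
  carrier := {f | ∀ n : ℤ, f.coeff n ∈ I ^ (-n).toNat}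
  zero_mem' := by intro n; simp
  add_mem' := by
    intro f g hf hg n
    rw [AddMonoidAlgebra.coeff_add, Finsupp.add_apply]
    exact add_mem (hf n) (hg n)
  mul_mem' := by
    classical
    intro f g hf hg n
    rw [AddMonoidAlgebra.coeff_mul]
    refine Submodule.sum_mem _ fun p _ => Submodule.sum_mem _ fun q _ => ?_
    show (if p + q = n then f.coeff p * g.coeff q else 0) ∈ I ^ (-n).toNat
    split_ifs with h
    · have hmul := Ideal.mul_mem_mul (hf p) (hg q)
      rw [← pow_add] at hmul
      exact Ideal.pow_le_pow_right (by omega) hmul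
    · exact zero_mem _
  one_mem' := by
    intro n
    rw [← single_zero_one_eq_one, AddMonoidAlgebra.coeff_single]
    rcases eq_or_ne n 0 with rfl | hn
    · rw [Finsupp.single_eq_same]; simp
    · rw [Finsupp.single_eq_of_ne hn]; exact zero_mem _
  algebraMap_mem' := by
    intro x n
    rw [LaurentPolynomial.algebraMap_apply, LaurentPolynomial.C_apply]
    rcases eq_or_ne n 0 with rfl | hn
    · simp
    · rw [if_neg hn]; exact zero_mem _

theorem mem_extendedReesAlgebra_iff (I : Ideal A) (f : LaurentPolynomial A) :
    f ∈ extendedReesAlgebra A I ↔ ∀ n : ℤ, f.coeff n ∈ I ^ (-n).toNat := Iff.rfl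

theorem single_mem_extendedReesAlgebra (I : Ideal A) (m : ℤ) (x : A)
    (hx : x ∈ I ^ (-m).toNat) :
    (AddMonoidAlgebra.single m x : LaurentPolynomial A) ∈ extendedReesAlgebra A I := by
  rw [mem_extendedReesAlgebra_iff]
  intro n
  rw [AddMonoidAlgebra.coeff_single]
  rcases eq_or_ne n m with rfl | hn
  · rwa [Finsupp.single_eq_same]
  · rw [Finsupp.single_eq_of_ne hn]; exact zero_mem _

/-- For `x ∈ I`, the element `x·T⁻¹` lies in the extended Rees algebra of `I`. -/
theorem C_mul_T_neg_one_mem_extendedReesAlgebra (I : Ideal A) {x : A} (hx : x ∈ I) :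
    C x * T (-1) ∈ extendedReesAlgebra A I := by
  rw [← single_eq_C_mul_T]
  exact single_mem_extendedReesAlgebra A I (-1) x (by simpa using hx)

/-- The element `T` lies in the extended Rees algebra of any ideal. -/
theorem T_one_mem_extendedReesAlgebra (I : Ideal A) :
    T 1 ∈ extendedReesAlgebra A I := by
  have h : (T 1 : LaurentPolynomial A) = AddMonoidAlgebra.single 1 1 := rfl
  rw [h]
  exact single_mem_extendedReesAlgebra A I 1 1 (by simp)


section Aux

variable {A : Type*} [CommRing A]

theorem single_mul_single'' (a b c : ℤ) (x y : A) (hc : a + b = c)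
    (f g : LaurentPolynomial A)
    (hf : f = AddMonoidAlgebra.single a x) (hg : g = AddMonoidAlgebra.single b y) :
    f * g = AddMonoidAlgebra.single c (x * y) := by
  subst hf hg hc
  exact AddMonoidAlgebra.single_mul_single _ _ _ _

theorem singleNegOne_mem_aux {r : ℕ} {a : Fin r → A} {I : Ideal A}
    (hI : I = Ideal.span (Set.range a))
    {J : Ideal (extendedReesAlgebra A I)}
    (hgen : ∀ (i : Fin r) (h : C (a i) * T (-1) ∈ extendedReesAlgebra A I),
      (⟨C (a i) * T (-1), h⟩ : extendedReesAlgebra A I) ∈ J)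
    {x : A} (hx : x ∈ I)
    (h : (AddMonoidAlgebra.single (-1 : ℤ) x : LaurentPolynomial A) ∈ extendedReesAlgebra A I) :
    (⟨AddMonoidAlgebra.single (-1 : ℤ) x, h⟩ : extendedReesAlgebra A I) ∈ J := by
  classical
  rw [hI, Ideal.span, Submodule.mem_span_range_iff_exists_fun A] at hx
  obtain ⟨c, hc⟩ := hx
  have memi : ∀ i : Fin r, C (a i) * T (-1) ∈ extendedReesAlgebra A I := fun i =>
    C_mul_T_neg_one_mem_extendedReesAlgebra A I (by rw [hI]; exact Ideal.subset_span ⟨i, rfl⟩)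
  have key : (∑ i : Fin r, algebraMap A (extendedReesAlgebra A I) (c i) *
        ⟨C (a i) * T (-1), memi i⟩ : extendedReesAlgebra A I)
      = (⟨AddMonoidAlgebra.single (-1 : ℤ) x, h⟩ : extendedReesAlgebra A I) := by
    apply Subtype.ext
    rw [AddSubmonoidClass.coe_finset_sum]
    show ∑ i : Fin r,
        ((algebraMap A (extendedReesAlgebra A I) (c i) *
          ⟨C (a i) * T (-1), memi i⟩ : extendedReesAlgebra A I) : LaurentPolynomial A)
      = AddMonoidAlgebra.single (-1 : ℤ) x
    simp only [MulMemClass.coe_mul, Subalgebra.coe_algebraMap,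
      LaurentPolynomial.algebraMap_apply]
    rw [single_eq_C_mul_T, ← hc]
    rw [map_sum, Finset.sum_mul]
    refine Finset.sum_congr rfl fun i _ => ?_
    rw [smul_eq_mul, map_mul, mul_assoc]
    simp [Algebra.algebraMap_self]
  rw [← key]
  exact Ideal.sum_mem _ fun i _ => Ideal.mul_mem_left _ _ (hgen i (memi i))

theorem singleNeg_mem_aux {r : ℕ} {a : Fin r → A} {I : Ideal A}
    (hI : I = Ideal.span (Set.range a))
    {J : Ideal (extendedReesAlgebra A I)}
    (hgen : ∀ (i : Fin r) (h : C (a i) * T (-1) ∈ extendedReesAlgebra A I),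
      (⟨C (a i) * T (-1), h⟩ : extendedReesAlgebra A I) ∈ J) :
    ∀ (n : ℤ), n < 0 → ∀ x ∈ I ^ (-n).toNat,
      ∀ h : (AddMonoidAlgebra.single n x : LaurentPolynomial A) ∈ extendedReesAlgebra A I,
      (⟨AddMonoidAlgebra.single n x, h⟩ : extendedReesAlgebra A I) ∈ J := by
  classical
  intro n hn x hx h
  rcases eq_or_ne n (-1 : ℤ) with rfl | hne
  · have hx1 : x ∈ I ^ 1 := Ideal.pow_le_pow_right (by omega) hx
    rw [pow_one] at hx1
    exact singleNegOne_mem_aux hI hgen hx1 h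
  · -- n ≤ -2
    set k : ℕ := (-n).toNat - 1 with hk
    have hk1 : (-n).toNat = k + 1 := by omega
    have hx' : x ∈ I ^ k * I := by
      rw [← pow_succ]
      exact Ideal.pow_le_pow_right (by omega) hx
    refine Submodule.mul_induction_on' (C := fun z _ =>
      ∀ h : (AddMonoidAlgebra.single n z : LaurentPolynomial A) ∈ extendedReesAlgebra A I,
        (⟨AddMonoidAlgebra.single n z, h⟩ : extendedReesAlgebra A I) ∈ J) ?_ ?_ hx' h
    · intro m hm w hw h
      have hm1 : (AddMonoidAlgebra.single (n + 1) m : LaurentPolynomial A) ∈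
          extendedReesAlgebra A I :=
        single_mem_extendedReesAlgebra A I _ m (Ideal.pow_le_pow_right (by omega) hm)
      have hw1 : (AddMonoidAlgebra.single (-1 : ℤ) w : LaurentPolynomial A) ∈
          extendedReesAlgebra A I :=
        single_mem_extendedReesAlgebra A I _ w (by simpa using hw)
      have key : (⟨AddMonoidAlgebra.single (n + 1) m, hm1⟩ : extendedReesAlgebra A I) *
          ⟨AddMonoidAlgebra.single (-1 : ℤ) w, hw1⟩ = ⟨AddMonoidAlgebra.single n (m * w), h⟩ := by
        apply Subtype.ext
        rw [MulMemClass.coe_mul]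
        exact single_mul_single'' (n + 1) (-1) n m w (by omega) _ _ rfl rfl
      rw [← key]
      exact Ideal.mul_mem_left _ _ (singleNegOne_mem_aux hI hgen hw hw1)
    · intro y hy z hz ihy ihz h
      have hy1 : (AddMonoidAlgebra.single n y : LaurentPolynomial A) ∈ extendedReesAlgebra A I :=
        single_mem_extendedReesAlgebra A I _ y
          (by rw [hk1, pow_succ]; exact hy)
      have hz1 : (AddMonoidAlgebra.single n z : LaurentPolynomial A) ∈ extendedReesAlgebra A I :=
        single_mem_extendedReesAlgebra A I _ z
          (by rw [hk1, pow_succ]; exact hz)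
      have key : (⟨AddMonoidAlgebra.single n y, hy1⟩ : extendedReesAlgebra A I) +
          ⟨AddMonoidAlgebra.single n z, hz1⟩ = ⟨AddMonoidAlgebra.single n (y + z), h⟩ := by
        apply Subtype.ext
        rw [AddMemClass.coe_add]
        exact (AddMonoidAlgebra.single_add n y z).symm
      rw [← key]
      exact add_mem (ihy hy1) (ihz hz1)

theorem coeff_mem_of_mem_J {r : ℕ} {a : Fin r → A} {I : Ideal A}
    (hI : I = Ideal.span (Set.range a))
    {J : Ideal (extendedReesAlgebra A I)}
    (hJ : J ≤ Ideal.span (Set.range fun i : Fin r =>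
      (⟨C (a i) * T (-1),
          C_mul_T_neg_one_mem_extendedReesAlgebra A I
            (by rw [hI]; exact Ideal.subset_span ⟨i, rfl⟩)⟩ :
        extendedReesAlgebra A I))) :
    ∀ g ∈ J, ∀ n : ℤ,
      ((g : extendedReesAlgebra A I) : LaurentPolynomial A).coeff n ∈ I ^ ((-(n + 1)).toNat + 1) := by
  classical
  intro g hg
  have hg' := hJ hg
  refine Submodule.span_induction
    (p := fun g _ => ∀ n : ℤ,
      ((g : extendedReesAlgebra A I) : LaurentPolynomial A).coeff n ∈ I ^ ((-(n + 1)).toNat + 1))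
    ?_ ?_ ?_ ?_ hg'
  · rintro _ ⟨i, rfl⟩ n
    show (C (a i) * T (-1) : LaurentPolynomial A).coeff n ∈ _
    rw [← single_eq_C_mul_T, AddMonoidAlgebra.coeff_single]
    rcases eq_or_ne n (-1 : ℤ) with rfl | hne
    · rw [Finsupp.single_eq_same]
      have e : ((-((-1 : ℤ) + 1)).toNat + 1) = 1 := by omega
      rw [e, pow_one, hI]
      exact Ideal.subset_span ⟨i, rfl⟩
    · rw [Finsupp.single_eq_of_ne hne]
      exact zero_mem _
  · intro n
    show ((0 : LaurentPolynomial A)).coeff n ∈ _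
    simp
  · intro y z _ _ ihy ihz n
    show ((y : LaurentPolynomial A) + z).coeff n ∈ _
    rw [AddMonoidAlgebra.coeff_add, Finsupp.add_apply]
    exact add_mem (ihy n) (ihz n)
  · intro c y _ ihy n
    show ((c : LaurentPolynomial A) * y).coeff n ∈ _
    rw [AddMonoidAlgebra.coeff_mul]
    refine Submodule.sum_mem _ fun p _ => Submodule.sum_mem _ fun q _ => ?_
    show (if p + q = n then (c : LaurentPolynomial A).coeff p * (y : LaurentPolynomial A).coeff q else 0)
      ∈ I ^ ((-(n + 1)).toNat + 1)
    split_ifs with hpq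
    · have hmul := Ideal.mul_mem_mul (c.2 p) (ihy q)
      rw [← pow_add] at hmul
      exact Ideal.pow_le_pow_right (by omega) hmul
    · exact zero_mem _

theorem aeval_T_one (p : Polynomial A) :
    Polynomial.aeval (T 1 : LaurentPolynomial A) p = Polynomial.toLaurent p := by
  rw [← Polynomial.toLaurentAlg_apply]
  refine DFunLike.congr_fun (Polynomial.algHom_ext ?_) p
  simp [Polynomial.toLaurentAlg_apply, Polynomial.toLaurent_X]

end Aux

/-- second assertion of Lemma 2.2 of the paper, affine-local form.
Let `a₁, …, a_r` be a regular sequence in `A` generating `I`, and let `J ⊆ R(A,I)` be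
the ideal of the extended Rees algebra generated by `a₁·T⁻¹, …, a_r·T⁻¹`.  Then the
composite `A`-algebra homomorphism `A[X] → R(A,I) → R(A,I)/J` sending `X` to the class
of `T` is surjective with kernel the ideal `I·A[X]`; equivalently
`R(A,I)/J ≅ (A/I)[X]` as `A`-algebras. -/
theorem extendedRees_quotient_by_section
    (r : ℕ) (a : Fin r → A)
    (hreg : RingTheory.Sequence.IsRegular A (List.ofFn a))
    (I : Ideal A) (hI : I = Ideal.span (Set.range a))
    (J : Ideal (extendedReesAlgebra A I))
    (hJ : J = Ideal.span (Set.range fun i : Fin r =>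
      (⟨C (a i) * T (-1),
          C_mul_T_neg_one_mem_extendedReesAlgebra A I
            (by rw [hI]; exact Ideal.subset_span ⟨i, rfl⟩)⟩ :
        extendedReesAlgebra A I)))
    (φ : Polynomial A →ₐ[A] ((extendedReesAlgebra A I) ⧸ J))
    (hφ : φ = Polynomial.aeval
      (Ideal.Quotient.mk J ⟨T 1, T_one_mem_extendedReesAlgebra A I⟩)) :
    Function.Surjective φ ∧
      RingHom.ker φ = Ideal.map (Polynomial.C : A →+* Polynomial A) I := by
  classical
  have hgen : ∀ (i : Fin r) (h : C (a i) * T (-1) ∈ extendedReesAlgebra A I),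
      (⟨C (a i) * T (-1), h⟩ : extendedReesAlgebra A I) ∈ J := by
    intro i h
    rw [hJ]
    exact Ideal.subset_span ⟨i, rfl⟩
  have himg : ∀ g : extendedReesAlgebra A I, ∃ p : Polynomial A,
      φ p = Ideal.Quotient.mk J g := by
    intro g
    have hdecomp : g = ∑ n ∈ (g : LaurentPolynomial A).coeff.support,
        ⟨AddMonoidAlgebra.single n ((g : LaurentPolynomial A).coeff n),
          single_mem_extendedReesAlgebra A I n _ (g.2 n)⟩ := by
      apply Subtype.ext
      rw [AddSubmonoidClass.coe_finset_sum]
      show (g : LaurentPolynomial A)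
        = ∑ n ∈ (g : LaurentPolynomial A).coeff.support,
            AddMonoidAlgebra.single n ((g : LaurentPolynomial A).coeff n)
      exact (AddMonoidAlgebra.sum_coeff_single (g : LaurentPolynomial A)).symm
    refine ⟨∑ n ∈ (g : LaurentPolynomial A).coeff.support,
      if 0 ≤ n then Polynomial.C ((g : LaurentPolynomial A).coeff n) * Polynomial.X ^ n.toNat
      else 0, ?_⟩
    rw [map_sum]
    conv_rhs => rw [hdecomp]
    rw [map_sum]
    refine Finset.sum_congr rfl fun n _ => ?_
    by_cases h0 : 0 ≤ n
    · rw [if_pos h0, hφ]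
      rw [map_mul, Polynomial.aeval_C, map_pow, Polynomial.aeval_X, ← map_pow]
      have halg : ∀ cc : A, algebraMap A (extendedReesAlgebra A I ⧸ J) cc
          = Ideal.Quotient.mk J (algebraMap A (extendedReesAlgebra A I) cc) := fun _ => rfl
      rw [halg, ← map_mul]
      congr 1
      apply Subtype.ext
      rw [MulMemClass.coe_mul, SubmonoidClass.coe_pow]
      have e1 : ((algebraMap A (extendedReesAlgebra A I) ((g : LaurentPolynomial A).coeff n) :
          extendedReesAlgebra A I) : LaurentPolynomial A)
          = C ((g : LaurentPolynomial A).coeff n) := by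
        rw [Subalgebra.coe_algebraMap, LaurentPolynomial.algebraMap_apply,
          Algebra.algebraMap_self, RingHom.id_apply]
      rw [e1]
      show C ((g : LaurentPolynomial A).coeff n) * (T 1 : LaurentPolynomial A) ^ n.toNat
        = AddMonoidAlgebra.single n ((g : LaurentPolynomial A).coeff n)
      rw [T_pow, single_eq_C_mul_T]
      congr 2
      omega
    · rw [if_neg h0, map_zero]
      have hmem := singleNeg_mem_aux hI hgen n (by omega) _ (g.2 n)
        (single_mem_extendedReesAlgebra A I n _ (g.2 n))
      exact ((Ideal.Quotient.eq_zero_iff_mem).2 hmem).symm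
  constructor
  · intro y
    obtain ⟨g, rfl⟩ := Ideal.Quotient.mk_surjective y
    exact himg g
  · apply le_antisymm
    · intro p hp
      have hp' : φ p = 0 := hp
      rw [hφ] at hp'
      have heq : Polynomial.aeval
            (Ideal.Quotient.mk J (⟨T 1, T_one_mem_extendedReesAlgebra A I⟩ :
              extendedReesAlgebra A I)) p
          = Ideal.Quotient.mk J (Polynomial.aeval
              (⟨T 1, T_one_mem_extendedReesAlgebra A I⟩ : extendedReesAlgebra A I) p) := by
        rw [← Ideal.Quotient.mkₐ_eq_mk A J]
        exact Polynomial.aeval_algHom_apply (Ideal.Quotient.mkₐ A J) _ p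
      rw [heq, Ideal.Quotient.eq_zero_iff_mem] at hp'
      have hcoe : ((Polynomial.aeval
            (⟨T 1, T_one_mem_extendedReesAlgebra A I⟩ : extendedReesAlgebra A I) p :
            extendedReesAlgebra A I) : LaurentPolynomial A)
          = Polynomial.toLaurent p := by
        rw [← aeval_T_one]
        exact (Polynomial.aeval_algHom_apply (extendedReesAlgebra A I).val _ p).symm
      rw [Ideal.mem_map_C_iff]
      intro k
      have hc := coeff_mem_of_mem_J hI (le_of_eq hJ) _ hp' (k : ℤ)
      rw [hcoe] at hc
      have hck : (Polynomial.toLaurent p).coeff (k : ℤ) = p.coeff k := by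
        rw [coeff_toLaurent]
        exact Finsupp.mapDomain_apply Nat.castEmbedding.injective _ k
      rw [hck] at hc
      have e : ((-((k : ℤ) + 1)).toNat + 1) = 1 := by omega
      rw [e, pow_one] at hc
      exact hc
    · rw [Ideal.map_le_iff_le_comap]
      intro x hx
      rw [Ideal.mem_comap, RingHom.mem_ker, hφ, Polynomial.aeval_C]
      have halg : algebraMap A (extendedReesAlgebra A I ⧸ J) x
          = Ideal.Quotient.mk J (algebraMap A (extendedReesAlgebra A I) x) := rfl
      rw [halg, Ideal.Quotient.eq_zero_iff_mem]
      have hm1 : (AddMonoidAlgebra.single (-1 : ℤ) x : LaurentPolynomial A) ∈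
          extendedReesAlgebra A I :=
        single_mem_extendedReesAlgebra A I _ x (by simpa using hx)
      have key : (⟨AddMonoidAlgebra.single (-1 : ℤ) x, hm1⟩ : extendedReesAlgebra A I) *
          ⟨T 1, T_one_mem_extendedReesAlgebra A I⟩
          = algebraMap A (extendedReesAlgebra A I) x := by
        apply Subtype.ext
        rw [MulMemClass.coe_mul]
        refine (single_mul_single'' (-1) 1 0 x 1 (by omega) _ _ rfl rfl).trans ?_
        rw [mul_one, single_eq_C, Subalgebra.coe_algebraMap,
          LaurentPolynomial.algebraMap_apply, Algebra.algebraMap_self, RingHom.id_apply]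
      rw [← key]
      exact Ideal.mul_mem_right _ _
        (singleNeg_mem_aux hI hgen (-1) (by omega) x (by simpa using hx) hm1)
end
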